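/- Let a, b, c, x, y ∈ ℝ with x ≠ 0 and y ≠ 0. Suppose 4*x³*y - 4*x*y³ + 2*a*x*y + b*y = 0 and x⁴ + y⁴ - 6*x²*y² + a*x² - a*y² + b*x + c = 0. Then x⁶ + (a/2)*x⁴ + (a²/16 - c/4)*x² - b²/64 = 0. -/
import Mathlib

theorem quartic_resolvent (a b c x y : ℝ) (hx : x ≠ 0) (hy : y ≠ 0)
    (h1 : 4 * x ^ 3 * y - 4 * x * y ^ 3 + 2 * a * x * y + b * y = 0)
    (h2 : x ^ 4 + y ^ 4 - 6 * x ^ 2 * y ^ 2 + a * x ^ 2 - a * y ^ 2 + b * x + c = 0) :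
    x ^ 6 + (a / 2) * x ^ 4 + (a ^ 2 / 16 - c / 4) * x ^ 2 - b ^ 2 / 64 = 0 := by
  have h1' : 4 * x ^ 3 - 4 * x * y ^ 2 + 2 * a * x + b = 0 := by
    have h : (4 * x ^ 3 - 4 * x * y ^ 2 + 2 * a * x + b) * y = 0 := by ring_nf; linarith [h1]
    rcases mul_eq_zero.mp h with h | h
    · exact h
    · exact absurd h hy
  linear_combination (-x^2/4)*h2 + (-(4*x*y^2 - 20*x^3 - 2*a*x + b)/64)*h1'
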